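/- Let K ≥ 2 and N ≥ 1 be integers and α_1,…,α_K ∈ ℝ. Suppose u_1,…,u_K : (0,∞) → ℝ are twice differentiable, satisfy (with indices modulo K) (1/4)(u_i''(r) + (1/r)u_i'(r)) = r^{2N/K}·(exp(u_i(r) − u_{i+1}(r)) − exp(u_{i−1}(r) − u_i(r))) for all r > 0, and satisfy the boundary conditions: lim_{r→0⁺} r·u_i'(r) = 2α_i and lim_{r→0⁺} r^{2(K+N)/K}·(exp(u_i(r) − u_{i+1}(r)) − 1) = 0 for each i, and lim_{r→∞} r·u_i'(r) = 0 for each i and lim_{r→∞} r^{2(K+N)/K}·∑_{i=1}^K (exp(u_i(r) − u_{i+1}(r)) − 1) = 0. Assume moreover that the function r ↦ r^{2N/K + 1}·∑_{i=1}^K (exp(u_i(r) − u_{i+1}(r)) − 1) is Lebesgue integrable on (0,∞). Then 4·∫_0^∞ r^{2N/K + 1}·∑_{i=1}^K (exp(u_i(r) − u_{i+1}(r)) − 1) dr = (K/(K+N))·∑_{i=1}^K α_i². (This is the value of the regulated L² norm μ of the Higgs field at a ℂ^×-fixed point.) -/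

import Mathlib

open scoped BigOperators
open Filter MeasureTheory

/-- Cyclic successor on `Fin K`. -/
def cycSucc {K : ℕ} (i : Fin K) : Fin K := ⟨((i : ℕ) + 1) % K, Nat.mod_lt _ i.pos⟩

/-- Cyclic predecessor on `Fin K`. -/
def cycPred {K : ℕ} (i : Fin K) : Fin K := ⟨((i : ℕ) + (K - 1)) % K, Nat.mod_lt _ i.pos⟩

lemma cycPred_cycSucc {K : ℕ} (i : Fin K) : cycPred (cycSucc i) = i := by
  have hK : 0 < K := i.pos
  apply Fin.ext
  show (((i : ℕ) + 1) % K + (K - 1)) % K = i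
  rw [Nat.mod_add_mod]
  have : (i : ℕ) + 1 + (K - 1) = (i : ℕ) + K := by omega
  rw [this, Nat.add_mod_right, Nat.mod_eq_of_lt i.isLt]

lemma cycSucc_cycPred {K : ℕ} (i : Fin K) : cycSucc (cycPred i) = i := by
  have hK : 0 < K := i.pos
  apply Fin.ext
  show (((i : ℕ) + (K - 1)) % K + 1) % K = i
  rw [Nat.mod_add_mod]
  have : (i : ℕ) + (K - 1) + 1 = (i : ℕ) + K := by omega
  rw [this, Nat.add_mod_right, Nat.mod_eq_of_lt i.isLt]

/-- cyclic shift as an equivalence -/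
def cycEquiv (K : ℕ) : Fin K ≃ Fin K where
  toFun := cycSucc
  invFun := cycPred
  left_inv := cycPred_cycSucc
  right_inv := cycSucc_cycPred

theorem regulated_L2_norm_value (K N : ℕ) (hK : 2 ≤ K) (hN : 1 ≤ N)
    (α : Fin K → ℝ) (u : Fin K → ℝ → ℝ)
    (hdiff : ∀ i, ∀ r : ℝ, 0 < r →
      DifferentiableAt ℝ (u i) r ∧ DifferentiableAt ℝ (deriv (u i)) r)
    (hode : ∀ i, ∀ r : ℝ, 0 < r →
      (1 / 4) * (deriv (deriv (u i)) r + (1 / r) * deriv (u i) r)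
        = r ^ ((2 * (N : ℝ)) / K) *
            (Real.exp (u i r - u (cycSucc i) r) - Real.exp (u (cycPred i) r - u i r)))
    (hbc0deriv : ∀ i, Tendsto (fun r : ℝ => r * deriv (u i) r)
      (nhdsWithin 0 (Set.Ioi 0)) (nhds (2 * α i)))
    (hbc0exp : ∀ i, Tendsto
      (fun r : ℝ => r ^ ((2 * ((K : ℝ) + N)) / K) * (Real.exp (u i r - u (cycSucc i) r) - 1))
      (nhdsWithin 0 (Set.Ioi 0)) (nhds 0))
    (hbcInfDeriv : ∀ i, Tendsto (fun r : ℝ => r * deriv (u i) r) atTop (nhds 0))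
    (hbcInfExp : Tendsto
      (fun r : ℝ => r ^ ((2 * ((K : ℝ) + N)) / K) *
        ∑ i, (Real.exp (u i r - u (cycSucc i) r) - 1))
      atTop (nhds 0))
    (hint : IntegrableOn
      (fun r : ℝ => r ^ ((2 * (N : ℝ)) / K + 1) *
        ∑ i, (Real.exp (u i r - u (cycSucc i) r) - 1))
      (Set.Ioi 0)) :
    4 * ∫ r in Set.Ioi (0 : ℝ),
        r ^ ((2 * (N : ℝ)) / K + 1) * ∑ i, (Real.exp (u i r - u (cycSucc i) r) - 1)
      = ((K : ℝ) / ((K : ℝ) + N)) * ∑ i, (α i) ^ 2 := by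
  have hKR : (0:ℝ) < K := by positivity
  have hKR' : (K:ℝ) ≠ 0 := hKR.ne'
  have hKN : (0:ℝ) < (K:ℝ) + N := by positivity
  set β : ℝ := (2 * ((K : ℝ) + N)) / K with hβdef
  have hβpos : 0 < β := by positivity
  have hβ2 : β = 2 + (2 * (N : ℝ)) / K := by
    rw [hβdef, mul_add, add_div, mul_div_assoc, div_self hKR', mul_one]
  have hβ1 : β - 1 = (2 * (N : ℝ)) / K + 1 := by rw [hβ2]; ring
  set F : ℝ → ℝ := fun r => ∑ i, (Real.exp (u i r - u (cycSucc i) r) - 1) with hFdef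
  set L : ℝ := (1/2) * ∑ i, α i ^ 2 with hLdef
  set Φ : ℝ → ℝ := fun r => r ^ β * F r - (1/8) * ∑ i, (r * deriv (u i) r) ^ 2 with hΦdef
  set G : ℝ → ℝ := fun r => if r ≤ 0 then -L else Φ r with hGdef
  set g : ℝ → ℝ := fun r => β * (r ^ ((2 * (N : ℝ)) / K + 1) * F r) with hgdef
  -- G agrees with Φ on Ioi 0
  have hGΦ : ∀ r : ℝ, 0 < r → G r = Φ r := by
    intro r hr; simp [hGdef, not_le.mpr hr]
  -- derivative of G on Ioi 0
  have hGderiv : ∀ r ∈ Set.Ioi (0:ℝ), HasDerivAt G (g r) r := by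
    intro r hr
    rw [Set.mem_Ioi] at hr
    have hu : ∀ i, HasDerivAt (u i) (deriv (u i) r) r :=
      fun i => (hdiff i r hr).1.hasDerivAt
    have hu' : ∀ i, HasDerivAt (deriv (u i)) (deriv (deriv (u i)) r) r :=
      fun i => (hdiff i r hr).2.hasDerivAt
    have hFd : HasDerivAt F (∑ i, Real.exp (u i r - u (cycSucc i) r) *
        (deriv (u i) r - deriv (u (cycSucc i)) r)) r := by
      apply HasDerivAt.fun_sum
      intro i _
      exact (((hu i).sub (hu (cycSucc i))).exp).sub_const 1
    have hrβ : HasDerivAt (fun x : ℝ => x ^ β) (β * r ^ (β - 1)) r :=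
      Real.hasDerivAt_rpow_const (Or.inl hr.ne')
    have hA := hrβ.mul hFd
    have hBi : ∀ i, HasDerivAt (fun x : ℝ => (x * deriv (u i) x) ^ 2)
        ((2:ℕ) * (r * deriv (u i) r) ^ (2-1) *
          (1 * deriv (u i) r + r * deriv (deriv (u i)) r)) r := by
      intro i
      exact ((hasDerivAt_id r).mul (hu' i)).pow 2
    have hB : HasDerivAt (fun x : ℝ => (1/8) * ∑ i, (x * deriv (u i) x) ^ 2)
        ((1/8) * ∑ i, (2:ℕ) * (r * deriv (u i) r) ^ (2-1) *
          (1 * deriv (u i) r + r * deriv (deriv (u i)) r)) r :=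
      (HasDerivAt.fun_sum (fun i _ => hBi i)).const_mul (1/8)
    have hΦd := hA.sub hB
    have hGd : HasDerivAt G (β * r ^ (β - 1) * F r +
        r ^ β * ∑ i, Real.exp (u i r - u (cycSucc i) r) *
          (deriv (u i) r - deriv (u (cycSucc i)) r)
        - (1/8) * ∑ i, (2:ℕ) * (r * deriv (u i) r) ^ (2-1) *
          (1 * deriv (u i) r + r * deriv (deriv (u i)) r)) r := by
      refine hΦd.congr_of_eventuallyEq ?_
      filter_upwards [eventually_gt_nhds hr] with x hx
      rw [hGΦ x hx]
      rfl
    convert hGd using 1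
    -- show g r equals the derivative expression
    have hre : ∑ i, Real.exp (u i r - u (cycSucc i) r) *
          (deriv (u i) r - deriv (u (cycSucc i)) r)
        = ∑ i, deriv (u i) r *
          (Real.exp (u i r - u (cycSucc i) r) - Real.exp (u (cycPred i) r - u i r)) := by
      have h2 : ∑ i, Real.exp (u i r - u (cycSucc i) r) * deriv (u (cycSucc i)) r
          = ∑ i, Real.exp (u (cycPred i) r - u i r) * deriv (u i) r := by
        rw [← Equiv.sum_comp (cycEquiv K)
          (fun j => Real.exp (u (cycPred j) r - u j r) * deriv (u j) r)]
        refine Finset.sum_congr rfl fun i _ => ?_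
        simp [cycEquiv, cycPred_cycSucc]
      calc ∑ i, Real.exp (u i r - u (cycSucc i) r) *
            (deriv (u i) r - deriv (u (cycSucc i)) r)
          = (∑ i, Real.exp (u i r - u (cycSucc i) r) * deriv (u i) r)
            - ∑ i, Real.exp (u i r - u (cycSucc i) r) * deriv (u (cycSucc i)) r := by
            rw [← Finset.sum_sub_distrib]; exact Finset.sum_congr rfl fun i _ => by ring
        _ = (∑ i, Real.exp (u i r - u (cycSucc i) r) * deriv (u i) r)
            - ∑ i, Real.exp (u (cycPred i) r - u i r) * deriv (u i) r := by rw [h2]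
        _ = _ := by
            rw [← Finset.sum_sub_distrib]; exact Finset.sum_congr rfl fun i _ => by ring
    have hmain : r ^ β * ∑ i, Real.exp (u i r - u (cycSucc i) r) *
          (deriv (u i) r - deriv (u (cycSucc i)) r)
        = (1/8) * ∑ i, (2:ℕ) * (r * deriv (u i) r) ^ (2-1) *
          (1 * deriv (u i) r + r * deriv (deriv (u i)) r) := by
      rw [hre, hβ2, Real.rpow_add hr, Finset.mul_sum, Finset.mul_sum]
      refine Finset.sum_congr rfl fun i _ => ?_
      have key : r ^ ((2 * (N:ℝ)) / K) *
          (Real.exp (u i r - u (cycSucc i) r) - Real.exp (u (cycPred i) r - u i r))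
          = (1 / 4) * (deriv (deriv (u i)) r + (1 / r) * deriv (u i) r) :=
        (hode i r hr).symm
      calc r ^ (2:ℝ) * r ^ ((2 * (N:ℝ)) / K) * (deriv (u i) r *
            (Real.exp (u i r - u (cycSucc i) r) - Real.exp (u (cycPred i) r - u i r)))
          = r ^ (2:ℝ) * deriv (u i) r * (r ^ ((2 * (N:ℝ)) / K) *
            (Real.exp (u i r - u (cycSucc i) r) - Real.exp (u (cycPred i) r - u i r))) := by
            ring
        _ = r ^ (2:ℝ) * deriv (u i) r *
            ((1 / 4) * (deriv (deriv (u i)) r + (1 / r) * deriv (u i) r)) := by rw [key]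
        _ = (1/8) * ((2:ℕ) * (r * deriv (u i) r) ^ (2-1) *
            (1 * deriv (u i) r + r * deriv (deriv (u i)) r)) := by
            rw [Real.rpow_two]
            field_simp
            ring
    rw [hgdef, ← hβ1, hmain]
    ring
  -- limit of G at 0 from the right, and continuity within Ici 0
  have hG0 : Tendsto G (nhdsWithin 0 (Set.Ioi 0)) (nhds (-L)) := by
    have hΦ0 : Tendsto Φ (nhdsWithin 0 (Set.Ioi 0)) (nhds (-L)) := by
      have h1 : Tendsto (fun r : ℝ => r ^ β * F r) (nhdsWithin 0 (Set.Ioi 0)) (nhds 0) := by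
        have : (fun r : ℝ => r ^ β * F r)
            = fun r : ℝ => ∑ i, r ^ ((2 * ((K : ℝ) + N)) / K) *
              (Real.exp (u i r - u (cycSucc i) r) - 1) := by
          funext r; rw [hFdef, Finset.mul_sum]
        rw [this]
        have := tendsto_finset_sum (Finset.univ : Finset (Fin K))
          (fun i _ => hbc0exp i)
        simpa using this
      have h2 : Tendsto (fun r : ℝ => (1/8) * ∑ i, (r * deriv (u i) r) ^ 2)
          (nhdsWithin 0 (Set.Ioi 0)) (nhds ((1/8) * ∑ i, (2 * α i) ^ 2)) := by
        exact (tendsto_finset_sum _ (fun i _ => (hbc0deriv i).pow 2)).const_mul (1/8)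
      have h3 : (0:ℝ) - (1/8) * ∑ i, (2 * α i) ^ 2 = -L := by
        rw [hLdef]
        have : ∑ i, (2 * α i) ^ 2 = 4 * ∑ i, α i ^ 2 := by
          rw [Finset.mul_sum]; exact Finset.sum_congr rfl fun i _ => by ring
        rw [this]; ring
      have := h1.sub h2
      rw [h3] at this
      exact this
    refine hΦ0.congr' ?_
    filter_upwards [self_mem_nhdsWithin] with x hx
    exact (hGΦ x hx).symm
  have hGcont : ContinuousWithinAt G (Set.Ici 0) 0 := by
    have hG00 : G 0 = -L := by simp [hGdef]
    rw [ContinuousWithinAt, hG00, ← Set.Ioi_insert, nhdsWithin_insert, tendsto_sup]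
    exact ⟨by simpa [hG00] using tendsto_pure_nhds G 0, hG0⟩
  -- limit of G at infinity
  have hGtop : Tendsto G atTop (nhds 0) := by
    have hΦtop : Tendsto Φ atTop (nhds 0) := by
      have h2 : Tendsto (fun r : ℝ => (1/8) * ∑ i, (r * deriv (u i) r) ^ 2)
          atTop (nhds ((1/8) * ∑ i : Fin K, ((0:ℝ)) ^ 2)) :=
        (tendsto_finset_sum _ (fun i _ => (hbcInfDeriv i).pow 2)).const_mul (1/8)
      have h0 : (0:ℝ) - (1/8) * ∑ _i : Fin K, ((0:ℝ)) ^ 2 = 0 := by simp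
      have h3 := hbcInfExp.sub h2
      rw [h0] at h3
      exact h3
    refine hΦtop.congr' ?_
    filter_upwards [eventually_gt_atTop (0:ℝ)] with x hx
    exact (hGΦ x hx).symm
  -- integrability
  have hgint : IntegrableOn g (Set.Ioi 0) := by
    exact hint.const_mul β
  -- FTC
  have hFTC : ∫ r in Set.Ioi (0:ℝ), g r = 0 - G 0 :=
    integral_Ioi_of_hasDerivAt_of_tendsto hGcont hGderiv hgint hGtop
  have hG00 : G 0 = -L := by simp [hGdef]
  rw [hG00] at hFTC
  have hI : β * ∫ r in Set.Ioi (0:ℝ),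
      r ^ ((2 * (N : ℝ)) / K + 1) * F r = L := by
    rw [← MeasureTheory.integral_const_mul]
    simpa [hgdef] using hFTC
  set I : ℝ := ∫ r in Set.Ioi (0:ℝ), r ^ ((2 * (N : ℝ)) / K + 1) * F r with hIdef
  show 4 * I = ((K : ℝ) / ((K : ℝ) + N)) * ∑ i, (α i) ^ 2
  have hβI : (2 * ((K : ℝ) + N)) / K * I = (1/2) * ∑ i, α i ^ 2 := hI
  rw [div_mul_eq_mul_div, eq_div_iff hKN.ne']
  rw [div_mul_eq_mul_div, div_eq_iff hKR'] at hβI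
  linear_combination 2 * hβI
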